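/- Let P be a finitely generated torsion-free commutative cancellative monoid. Every P-homogeneous prime ideal 𝔭 of the monoid algebra ℤ[P] is of the form (q) + (K), where (q) = 𝔭 ∩ ℤ is a prime ideal of ℤ and K = {p ∈ P : t^p ∈ 𝔭} is a prime ideal of the monoid P. -/

import Mathlib

/-- Let `P` be a finitely generated torsion-free commutative cancellative monoid. Every
`P`-homogeneous prime ideal `𝔭` of the monoid algebra `ℤ[P]` is of the form `(q) + (K)`:
it is generated by `𝔭 ∩ ℤ` (automatically a prime ideal `(q)` of `ℤ`) together with the
monomials `t^k` for `k ∈ K = {p ∈ P | t^p ∈ 𝔭}`, and `K` is a prime ideal of the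
monoid `P`. -/
theorem homogeneous_prime_structure {P : Type*} [AddCancelCommMonoid P]
    (hfg : AddMonoid.FG P)
    (htf : ∀ (n : ℕ) (a b : P), 0 < n → n • a = n • b → a = b)
    (𝔭 : Ideal (AddMonoidAlgebra ℤ P)) (hprime : 𝔭.IsPrime)
    (hhom : ∃ S : Set (AddMonoidAlgebra ℤ P), 𝔭 = Ideal.span S ∧
      ∀ f ∈ S, ∃ (n : ℤ) (p : P), f = AddMonoidAlgebra.single p n) :
    -- `K` is an ideal of the monoid `P` ...
    (∀ p : P, ∀ k ∈ {p : P | (AddMonoidAlgebra.single p 1 : AddMonoidAlgebra ℤ P) ∈ 𝔭},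
      p + k ∈ {p : P | (AddMonoidAlgebra.single p 1 : AddMonoidAlgebra ℤ P) ∈ 𝔭}) ∧
    -- ... which is proper ...
    {p : P | (AddMonoidAlgebra.single p 1 : AddMonoidAlgebra ℤ P) ∈ 𝔭} ≠ Set.univ ∧
    -- ... and prime, ...
    (∀ p q : P, (AddMonoidAlgebra.single (p + q) 1 : AddMonoidAlgebra ℤ P) ∈ 𝔭 →
      (AddMonoidAlgebra.single p 1 : AddMonoidAlgebra ℤ P) ∈ 𝔭 ∨
      (AddMonoidAlgebra.single q 1 : AddMonoidAlgebra ℤ P) ∈ 𝔭) ∧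
    -- and `𝔭 = (q) + (K)` where `(q) = 𝔭 ∩ ℤ`:
    𝔭 = Ideal.span
      (((fun n : ℤ => (algebraMap ℤ (AddMonoidAlgebra ℤ P)) n) ''
          {n : ℤ | (algebraMap ℤ (AddMonoidAlgebra ℤ P)) n ∈ 𝔭}) ∪
        ((fun p : P => (AddMonoidAlgebra.single p 1 : AddMonoidAlgebra ℤ P)) ''
          {p : P | (AddMonoidAlgebra.single p 1 : AddMonoidAlgebra ℤ P) ∈ 𝔭})) := by
  have key : ∀ (p : P) (n : ℤ),
      algebraMap ℤ (AddMonoidAlgebra ℤ P) n * AddMonoidAlgebra.single p 1 =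
        AddMonoidAlgebra.single p n := by
    intro p n
    have h1 : algebraMap ℤ (AddMonoidAlgebra ℤ P) n = AddMonoidAlgebra.single 0 n := by
      simp [AddMonoidAlgebra.coe_algebraMap, AddMonoidAlgebra.intCast_def]
    rw [h1, AddMonoidAlgebra.single_mul_single, zero_add, mul_one]
  refine ⟨?_, ?_, ?_, ?_⟩
  · intro p k hk
    have h := 𝔭.mul_mem_left (AddMonoidAlgebra.single p 1) hk
    rwa [AddMonoidAlgebra.single_mul_single, one_mul] at h
  · intro h
    have h0 : (0 : P) ∈ {p : P | (AddMonoidAlgebra.single p 1 : AddMonoidAlgebra ℤ P) ∈ 𝔭} := by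
      rw [h]; trivial
    have h1 : (1 : AddMonoidAlgebra ℤ P) ∈ 𝔭 := by
      rwa [AddMonoidAlgebra.one_def]
    exact hprime.ne_top (𝔭.eq_top_of_isUnit_mem h1 isUnit_one)
  · intro p q hpq
    apply hprime.mem_or_mem (x := AddMonoidAlgebra.single p 1) (y := AddMonoidAlgebra.single q 1)
    rwa [AddMonoidAlgebra.single_mul_single, one_mul]
  · obtain ⟨S, hS, hSmono⟩ := hhom
    apply le_antisymm
    · conv_lhs => rw [hS]
      apply Ideal.span_le.2
      intro f hf
      obtain ⟨n, p, rfl⟩ := hSmono f hf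
      have hmem : AddMonoidAlgebra.single p n ∈ 𝔭 := by
        rw [hS]; exact Ideal.subset_span hf
      show AddMonoidAlgebra.single p n ∈ _
      rw [← key] at hmem ⊢
      rcases hprime.mem_or_mem hmem with h | h
      · exact Ideal.mul_mem_right _ _ (Ideal.subset_span (Or.inl ⟨n, h, rfl⟩))
      · exact Ideal.mul_mem_left _ _ (Ideal.subset_span (Or.inr ⟨p, h, rfl⟩))
    · apply Ideal.span_le.2
      rintro f (⟨n, hn, rfl⟩ | ⟨p, hp, rfl⟩)
      · exact hn
      · exact hp
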